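/- Fix nonzero complex polynomials T₀, T₁, an index i ∈ {0,1}, and an admissible sequence (φ_n)_{n≥1}. Let χ be any polynomial with χ′ = T_i. Then for every n ≥ 1: Wr(φ₁,…,φ_n,χ) = (−1)^{n−1} · T_i^n · T_{i+1}^{n−1} · Wr(φ₁,…,φ_{n−1}), where Wr(φ₁,…,φ₀) is interpreted as 1. -/
import Mathlib


open Polynomial

noncomputable section

/-- The Wronskian of two polynomials: `Wr(f,g) = f·g′ − f′·g`. -/
def pWr (f g : ℂ[X]) : ℂ[X] := f * derivative g - derivative f * g

/-- Higher-order Wronskian: determinant of the matrix whose `(j,l)` entry is the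
`j`-th formal derivative of `f l` (rows and columns indexed from `0`). -/
def WrN {n : ℕ} (f : Fin n → ℂ[X]) : ℂ[X] :=
  (Matrix.of fun j l : Fin n => (fun q : ℂ[X] => derivative q)^[(j : ℕ)] (f l)).det

/-- `T₀` and `T₁` extended to all indices by parity: `T_n = T₀` for `n` even, `T₁` for odd. -/
def Tper (T0 T1 : ℂ[X]) (n : ℕ) : ℂ[X] := if n % 2 = 0 then T0 else T1

/-- A sequence `(φ_n)_{n ≥ 1}` is admissible if `φ₁ = 1` and for each `n ≥ 1` there is `ρ_n`
with `ρ_n′ = T_{i+1}·φ_n` and `φ_{n+1}′ = T_i·ρ_n`, i.e. `φ_{n+1} = ∫T_i∫T_{i+1}φ_n`. -/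
def Admissible (T0 T1 : ℂ[X]) (i : ℕ) (φ : ℕ → ℂ[X]) : Prop :=
  φ 1 = 1 ∧ ∀ n, 1 ≤ n → ∃ ρ : ℂ[X],
    derivative ρ = Tper T0 T1 (i + 1) * φ n ∧ derivative (φ (n + 1)) = Tper T0 T1 i * ρ

/-- `a_{2r} = r²`, `a_{2r+1} = r(r+1)`. -/
def aSeq (n : ℕ) : ℕ := (n / 2) * ((n + 1) / 2)

/-- `W_n = Wr(φ₁, …, φ_n)`. -/
def Wseq (φ : ℕ → ℂ[X]) (n : ℕ) : ℂ[X] := WrN (fun j : Fin n => φ ((j : ℕ) + 1))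

/-- Reduction: if the first function is `1`, the Wronskian is the Wronskian of the
derivatives of the remaining functions. -/
lemma wrN_cons_one {m : ℕ} (f : Fin (m + 1) → ℂ[X]) (hf : f 0 = 1) :
    WrN f = WrN (fun l : Fin m => derivative (f l.succ)) := by
  unfold WrN
  rw [Matrix.det_succ_column_zero]
  rw [Finset.sum_eq_single 0]
  · simp only [Matrix.of_apply, Fin.val_zero, Function.iterate_zero, id_eq, hf,
      Fin.succAbove_zero, pow_zero, one_mul]
    rfl
  · intro b _ hb
    have hb' : 0 < (b : ℕ) := Nat.pos_of_ne_zero (fun h => hb (Fin.ext h))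
    simp [hf, Polynomial.iterate_derivative_one hb']
  · simp

/-- Wronskian of `g • f` equals `g ^ m` times Wronskian of `f`. -/
lemma wrN_mul {m : ℕ} (g : ℂ[X]) (f : Fin m → ℂ[X]) :
    WrN (fun l => g * f l) = g ^ m * WrN f := by
  classical
  set L : Matrix (Fin m) (Fin m) ℂ[X] :=
    Matrix.of (fun j k : Fin m => if (k : ℕ) ≤ (j : ℕ) then
      ((j : ℕ).choose (k : ℕ) : ℂ[X]) * (fun q : ℂ[X] => derivative q)^[(j : ℕ) - (k : ℕ)] g
      else 0) with hL
  have hfac : (Matrix.of fun j l : Fin m =>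
      (fun q : ℂ[X] => derivative q)^[(j : ℕ)] (g * f l)) =
      L * (Matrix.of fun j l : Fin m => (fun q : ℂ[X] => derivative q)^[(j : ℕ)] (f l)) := by
    apply Matrix.ext
    intro j l
    simp only [Matrix.mul_apply, Matrix.of_apply, hL]
    rw [Polynomial.iterate_derivative_mul]
    rw [Fin.sum_univ_eq_sum_range (fun k => (if k ≤ (j : ℕ) then ((j : ℕ).choose k : ℂ[X]) *
        (fun q : ℂ[X] => derivative q)^[(j : ℕ) - k] g else 0) *
        (fun q : ℂ[X] => derivative q)^[k] (f l)) m]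
    have h1 : ∑ k ∈ Finset.range m, ((if k ≤ (j : ℕ) then ((j : ℕ).choose k : ℂ[X]) *
          (fun q : ℂ[X] => derivative q)^[(j : ℕ) - k] g else 0) *
          (fun q : ℂ[X] => derivative q)^[k] (f l)) =
        ∑ k ∈ Finset.range ((j : ℕ) + 1), ((if k ≤ (j : ℕ) then ((j : ℕ).choose k : ℂ[X]) *
          (fun q : ℂ[X] => derivative q)^[(j : ℕ) - k] g else 0) *
          (fun q : ℂ[X] => derivative q)^[k] (f l)) := by
      refine (Finset.sum_subset (Finset.range_subset_range.mpr j.isLt) ?_).symm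
      intro k _ hk
      simp only [Finset.mem_range, not_lt] at hk
      rw [if_neg (by omega), zero_mul]
    rw [h1]
    apply Finset.sum_congr rfl
    intro k hk
    simp only [Finset.mem_range] at hk
    rw [if_pos (by omega), nsmul_eq_mul, mul_assoc]
  have hdetL : L.det = g ^ m := by
    rw [Matrix.det_of_lowerTriangular]
    · simp [hL]
    · intro a b hab
      have h' : a < b := hab
      simp only [hL, Matrix.of_apply]
      rw [if_neg (Nat.not_le.mpr h')]
  unfold WrN
  rw [hfac, Matrix.det_mul, hdetL]

lemma wrN_snoc {m : ℕ} (f : Fin m → ℂ[X]) (x : ℂ[X]) :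
    WrN (Fin.snoc f x) = (-1) ^ m * WrN (Fin.cons x f) := by
  unfold WrN
  have h : (Matrix.of fun j l : Fin (m + 1) =>
      (fun q : ℂ[X] => derivative q)^[(j : ℕ)] (Fin.snoc (α := fun _ => ℂ[X]) f x l)) =
      (Matrix.of fun j l : Fin (m + 1) =>
        (fun q : ℂ[X] => derivative q)^[(j : ℕ)] (Fin.cons (α := fun _ => ℂ[X]) x f l)).submatrix id
        (finRotate (m + 1)) := by
    ext j l
    rw [Fin.snoc_eq_cons_rotate f x]
    rfl
  rw [h, Matrix.det_permute', sign_finRotate]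
  push_cast
  ring_nf

/-- For an admissible sequence and `χ` with `χ′ = T_i`:
`Wr(φ₁,…,φ_n,χ) = (−1)^{n−1}·T_i^n·T_{i+1}^{n−1}·Wr(φ₁,…,φ_{n−1})`. -/
theorem wronskian_with_antiderivative (T0 T1 : ℂ[X]) (hT0 : T0 ≠ 0) (hT1 : T1 ≠ 0)
    (i : ℕ) (hi : i ≤ 1) (φ : ℕ → ℂ[X]) (hφ : Admissible T0 T1 i φ)
    (χ : ℂ[X]) (hχ : derivative χ = Tper T0 T1 i) (n : ℕ) (hn : 1 ≤ n) :
    WrN (Fin.snoc (fun j : Fin n => φ ((j : ℕ) + 1)) χ) =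
      (-1) ^ (n - 1) * Tper T0 T1 i ^ n * Tper T0 T1 (i + 1) ^ (n - 1) * Wseq φ (n - 1) := by
  obtain ⟨hφ1, hρ⟩ := hφ
  choose ρ hρ1 hρ2 using hρ
  obtain ⟨m, rfl⟩ : ∃ m, n = m + 1 := ⟨n - 1, (Nat.succ_pred_eq_of_pos hn).symm⟩
  simp only [Nat.add_sub_cancel]
  set ρv : Fin m → ℂ[X] := fun j => ρ ((j : ℕ) + 1) (Nat.le_add_left 1 _) with hρv
  have h0 : (Fin.snoc (fun j : Fin (m + 1) => φ ((j : ℕ) + 1)) χ : Fin (m + 2) → ℂ[X]) 0 = 1 := by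
    have : (0 : Fin (m + 2)) = Fin.castSucc 0 := rfl
    rw [this, Fin.snoc_castSucc]
    simpa using hφ1
  rw [wrN_cons_one _ h0]
  have hsucc : (fun l : Fin (m + 1) => derivative
      ((Fin.snoc (fun j : Fin (m + 1) => φ ((j : ℕ) + 1)) χ : Fin (m + 2) → ℂ[X]) l.succ)) =
      fun l => Tper T0 T1 i * (Fin.snoc ρv 1 : Fin (m + 1) → ℂ[X]) l := by
    funext l
    refine Fin.lastCases ?_ (fun k => ?_) l
    · have h1 : (Fin.last m).succ = Fin.last (m + 1) := rfl
      rw [h1, Fin.snoc_last, Fin.snoc_last, hχ, mul_one]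
    · rw [Fin.succ_castSucc, Fin.snoc_castSucc, Fin.snoc_castSucc]
      have := hρ2 ((k : ℕ) + 1) (Nat.le_add_left 1 _)
      simpa [hρv] using this
  rw [hsucc, wrN_mul, wrN_snoc, wrN_cons_one _ (Fin.cons_zero _ _)]
  have hcons : (fun l : Fin m => derivative
      ((Fin.cons 1 ρv : Fin (m + 1) → ℂ[X]) l.succ)) =
      fun l : Fin m => Tper T0 T1 (i + 1) * φ ((l : ℕ) + 1) := by
    funext l
    rw [Fin.cons_succ]
    exact hρ1 ((l : ℕ) + 1) (Nat.le_add_left 1 _)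
  rw [hcons, wrN_mul]
  unfold Wseq
  ring
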